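/- Let (g, ·) be a pre-Lie algebra and V a vector space with linear maps L, R: g → gl(V). Then (V; L, R) is a bimodule over g if and only if (V*; L* − R*, −R*) is a bimodule over g, where L*, R*: g → gl(V*) are defined by ⟨L*_x ξ, u⟩ = −⟨ξ, L_x u⟩ and ⟨R*_x ξ, u⟩ = −⟨ξ, R_x u⟩. -/
import Mathlib


/-- A bimodule `(W; L, R)` over a pre-Lie algebra `(G, m)`. -/
def IsPreLieBimodule {𝕜 G W : Type*} [Field 𝕜] [AddCommGroup G] [Module 𝕜 G]
    [AddCommGroup W] [Module 𝕜 W]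
    (m : G →ₗ[𝕜] G →ₗ[𝕜] G) (L R : G → W →ₗ[𝕜] W) : Prop :=
  (∀ (x y : G) (u : W), L x (L y u) - L (m x y) u = L y (L x u) - L (m y x) u) ∧
  (∀ (x y : G) (u : W), L x (R y u) - R y (L x u) = R (m x y) u - R y (R x u))

/-- `(V; L, R)` is a bimodule over the pre-Lie algebra `g` iff
`(V*; L* − R*, −R*)` is a bimodule over `g`, where
`⟨L*_x ξ, u⟩ = −⟨ξ, L_x u⟩` and `⟨R*_x ξ, u⟩ = −⟨ξ, R_x u⟩`. -/
theorem dual_bimodule_iff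
    {𝕜 G V : Type*} [Field 𝕜] [CharZero 𝕜] [AddCommGroup G] [Module 𝕜 G]
    [AddCommGroup V] [Module 𝕜 V] [FiniteDimensional 𝕜 V]
    (m : G →ₗ[𝕜] G →ₗ[𝕜] G)
    (hm : ∀ x y z : G, m (m x y) z - m x (m y z) = m (m y x) z - m y (m x z))
    (L R : G →ₗ[𝕜] Module.End 𝕜 V) :
    IsPreLieBimodule m (fun x => L x) (fun x => R x) ↔
      IsPreLieBimodule m (fun x => -(L x).dualMap + (R x).dualMap)
        (fun x => (R x).dualMap) := by
  constructor
  · rintro ⟨h1, h2⟩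
    constructor
    · intro x y φ
      ext u
      have e1 := congrArg φ (h1 x y u)
      have e2 := congrArg φ (h2 x y u)
      have e3 := congrArg φ (h2 y x u)
      simp only [map_sub] at e1 e2 e3
      simp only [LinearMap.sub_apply, LinearMap.add_apply, LinearMap.neg_apply,
        LinearMap.dualMap_apply]
      linear_combination -e1 + e2 - e3
    · intro x y φ
      ext u
      have e2 := congrArg φ (h2 x y u)
      simp only [map_sub] at e2
      simp only [LinearMap.sub_apply, LinearMap.add_apply, LinearMap.neg_apply,
        LinearMap.dualMap_apply]
      linear_combination e2
  · rintro ⟨h1, h2⟩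
    have H2 : ∀ (x y : G) (u : V),
        L x (R y u) - R y (L x u) = R (m x y) u - R y (R x u) := by
      intro x y u
      rw [← sub_eq_zero, ← Module.forall_dual_apply_eq_zero_iff 𝕜]
      intro φ
      have e2 := congrArg (fun ψ : Module.Dual 𝕜 V => ψ u) (h2 x y φ)
      simp only [LinearMap.sub_apply, LinearMap.add_apply, LinearMap.neg_apply,
        LinearMap.dualMap_apply] at e2
      simp only [map_sub]
      linear_combination e2
    refine ⟨?_, H2⟩
    intro x y u
    rw [← sub_eq_zero, ← Module.forall_dual_apply_eq_zero_iff 𝕜]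
    intro φ
    have e1 := congrArg (fun ψ : Module.Dual 𝕜 V => ψ u) (h1 x y φ)
    have e2 := congrArg φ (H2 x y u)
    have e3 := congrArg φ (H2 y x u)
    simp only [LinearMap.sub_apply, LinearMap.add_apply, LinearMap.neg_apply,
      LinearMap.dualMap_apply] at e1
    simp only [map_sub] at e2 e3
    simp only [map_sub]
    linear_combination -e1 + e2 - e3
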